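/- Let N be a standard real subspace of a complex Hilbert space H, with Tomita operator s_N(h + ik) = h - ik for h, k ∈ N, and modular operator δ_N (where s_N = j_N δ_N^{1/2} is the polar decomposition). Then there exists a standard subspace M properly containing N if and only if 0 belongs to the spectrum of δ_N. -/

import Mathlib

open Topology


/-- Multiplication by `i` as a real-linear map. -/
noncomputable def mulI (H : Type*) [NormedAddCommGroup H] [InnerProductSpace ℂ H] :
    H →ₗ[ℝ] H where
  toFun x := (Complex.I : ℂ) • x
  map_add' x y := smul_add _ x y
  map_smul' r x := by simpa using (smul_comm (Complex.I) r x)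

theorem norm_j_eq' {H : Type*} [NormedAddCommGroup H] [InnerProductSpace ℂ H]
    (j : H →ₗ[ℝ] H)
    (hjanti : ∀ x y : H, (inner ℂ (j x) (j y) : ℂ) = inner ℂ y x) (x : H) : ‖j x‖ = ‖x‖ := by
  have h2 : (inner ℂ (j x) (j x) : ℂ) = inner ℂ x x := hjanti x x
  rw [inner_self_eq_norm_sq_to_K, inner_self_eq_norm_sq_to_K] at h2
  have h3 : ‖j x‖ ^ 2 = ‖x‖ ^ 2 := by exact_mod_cast h2
  nlinarith [norm_nonneg (j x), norm_nonneg x]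

/-- The graph of `j ∘ sqrtδ` as a real submodule of `H × H`. -/
noncomputable def tomitaGraph {H : Type*} [NormedAddCommGroup H] [InnerProductSpace ℂ H]
    (j : H →ₗ[ℝ] H) (sqrtδ : H →ₗ.[ℂ] H) : Submodule ℝ (H × H) where
  carrier := {p | ∃ x : sqrtδ.domain, p.1 = (x : H) ∧ p.2 = j (sqrtδ x)}
  add_mem' := by
    rintro ⟨a1, a2⟩ ⟨b1, b2⟩ ⟨x, hx1, hx2⟩ ⟨y, hy1, hy2⟩
    dsimp only at hx1 hx2 hy1 hy2
    refine ⟨x + y, ?_, ?_⟩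
    · show a1 + b1 = ((x + y : sqrtδ.domain) : H)
      rw [Submodule.coe_add, hx1, hy1]
    · show a2 + b2 = j (sqrtδ (x + y))
      rw [sqrtδ.map_add, map_add, hx2, hy2]
  zero_mem' := ⟨0, by simp, by simp⟩
  smul_mem' := by
    rintro r ⟨a1, a2⟩ ⟨x, hx1, hx2⟩
    dsimp only at hx1 hx2
    refine ⟨(r : ℂ) • x, ?_, ?_⟩
    · show r • a1 = (((r : ℂ) • x : sqrtδ.domain) : H)
      rw [Submodule.coe_smul, Complex.coe_smul, hx1]
    · show r • a2 = j (sqrtδ ((r : ℂ) • x))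
      rw [sqrtδ.map_smul, Complex.coe_smul, map_smul, hx2]

theorem mem_tomitaGraph {H : Type*} [NormedAddCommGroup H] [InnerProductSpace ℂ H]
    (j : H →ₗ[ℝ] H) (sqrtδ : H →ₗ.[ℂ] H) (p : H × H) :
    p ∈ tomitaGraph j sqrtδ ↔ ∃ x : sqrtδ.domain, p.1 = (x : H) ∧ p.2 = j (sqrtδ x) :=
  Iff.rfl

theorem exists_ext {H : Type*}
    [NormedAddCommGroup H] [InnerProductSpace ℂ H] [CompleteSpace H]
    (N : Submodule ℝ H)
    (hstd2 : (N ⊔ N.map (mulI H)).topologicalClosure = ⊤)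
    (j : H →ₗ[ℝ] H)
    (hjinv : ∀ x, j (j x) = x)
    (hjconj : ∀ x, j (Complex.I • x) = -(Complex.I • j x))
    (hjanti : ∀ x y : H, (inner ℂ (j x) (j y) : ℂ) = inner ℂ y x)
    (sqrtδ : H →ₗ.[ℂ] H)
    (hdense : Dense (sqrtδ.domain : Set H))
    (hsa : ∀ x y : sqrtδ.domain, (inner ℂ (sqrtδ x) (y : H) : ℂ) = inner ℂ (x : H) (sqrtδ y))
    (hs : ∀ h ∈ N, ∀ k ∈ N, ∃ hmem : h + Complex.I • k ∈ sqrtδ.domain,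
        j (sqrtδ ⟨h + Complex.I • k, hmem⟩) = h - Complex.I • k)
    (hdom : ∀ x ∈ sqrtδ.domain, ∃ h ∈ N, ∃ k ∈ N, x = h + Complex.I • k)
    (hnb : ¬ ∃ c > (0:ℝ), ∀ x : sqrtδ.domain, c * ‖(x : H)‖ ≤ ‖sqrtδ x‖) :
    ∃ M : Submodule ℝ H, IsClosed (M : Set H) ∧ M ⊓ M.map (mulI H) = ⊥ ∧
        (M ⊔ M.map (mulI H)).topologicalClosure = ⊤ ∧ N < M := by
  classical
  have hjn : ∀ x : H, ‖j x‖ = ‖x‖ := norm_j_eq' j hjanti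
  have hjcont : Continuous j :=
    AddMonoidHomClass.continuous_of_bound j 1 (fun x => by rw [hjn, one_mul])
  set G₀ := tomitaGraph j sqrtδ with hG₀def
  set G := G₀.topologicalClosure with hGdef
  have hGc : IsClosed (G : Set (H × H)) := Submodule.isClosed_topologicalClosure _
  have hG₀G : G₀ ≤ G := Submodule.le_topologicalClosure _
  have hGcoe : (G : Set (H × H)) = closure (G₀ : Set (H × H)) :=
    Submodule.topologicalClosure_coe _
  -- closability
  have g1 : ∀ z : H, ((0 : H), z) ∈ G → z = 0 := by
    intro z hz
    have hz2 : ∀ y : sqrtδ.domain, (inner ℂ (j z) ((y : H)) : ℂ) = 0 := by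
      intro y
      have hcl : IsClosed {p : H × H | (inner ℂ (j p.2) ((y : H)) : ℂ) = inner ℂ p.1 ((sqrtδ y : H))} :=
        isClosed_eq (Continuous.inner (hjcont.comp continuous_snd) continuous_const)
          (Continuous.inner continuous_fst continuous_const)
      have hsub0 : (G₀ : Set (H × H)) ⊆
          {p : H × H | (inner ℂ (j p.2) ((y : H)) : ℂ) = inner ℂ p.1 ((sqrtδ y : H))} := by
        rintro ⟨p1, p2⟩ ⟨x, hx1, hx2⟩
        dsimp only at hx1 hx2
        show (inner ℂ (j p2) ((y : H)) : ℂ) = inner ℂ p1 ((sqrtδ y : H))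
        rw [hx1, hx2, hjinv]
        exact hsa x y
      have hsub : (G : Set (H × H)) ⊆
          {p : H × H | (inner ℂ (j p.2) ((y : H)) : ℂ) = inner ℂ p.1 ((sqrtδ y : H))} := by
        rw [hGcoe]
        exact hcl.closure_subset_iff.mpr hsub0
      have := hsub hz
      simpa using this
    have hjz : j z = 0 := hdense.eq_zero_of_inner_left (𝕜 := ℂ) (fun v hv => hz2 ⟨v, hv⟩)
    calc z = j (j z) := (hjinv z).symm
      _ = 0 := by rw [hjz, map_zero]
  -- stability under (a, b) ↦ (I•a, -(I•b))
  have g2 : ∀ p : H × H, p ∈ G → (Complex.I • p.1, -(Complex.I • p.2)) ∈ G := by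
    intro p hp
    have hTcont : Continuous (fun q : H × H => (Complex.I • q.1, -(Complex.I • q.2))) :=
      Continuous.prodMk (continuous_fst.const_smul _) ((continuous_snd.const_smul _).neg)
    have hmaps : Set.MapsTo (fun q : H × H => (Complex.I • q.1, -(Complex.I • q.2)))
        (G₀ : Set (H × H)) (G₀ : Set (H × H)) := by
      rintro ⟨p1, p2⟩ ⟨x, hx1, hx2⟩
      dsimp only at hx1 hx2
      refine ⟨Complex.I • x, ?_, ?_⟩
      · show Complex.I • p1 = ((Complex.I • x : sqrtδ.domain) : H)
        rw [Submodule.coe_smul, hx1]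
      · show -(Complex.I • p2) = j (sqrtδ (Complex.I • x))
        rw [sqrtδ.map_smul, hjconj, hx2]
    have hp' : p ∈ closure (G₀ : Set (H × H)) := by rw [← hGcoe]; exact hp
    have h2 := map_mem_closure hTcont hp' hmaps
    have : (Complex.I • p.1, -(Complex.I • p.2)) ∈ (G : Set (H × H)) := by
      rw [hGcoe]; exact h2
    exact this
  -- real/imaginary decomposition of complex scalars
  have hdecomp : ∀ (cz : ℂ) (v : H), cz • v = cz.re • v + cz.im • (Complex.I • v) := by
    intro cz v
    calc cz • v = ((cz.re : ℂ) + (cz.im : ℂ) * Complex.I) • v := by rw [Complex.re_add_im]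
      _ = (cz.re : ℂ) • v + ((cz.im : ℂ) * Complex.I) • v := add_smul _ _ _
      _ = cz.re • v + cz.im • (Complex.I • v) := by
          rw [Complex.coe_smul, mul_smul, Complex.coe_smul]
  set Dbar := G.map (LinearMap.fst ℝ H H) with hDbardef
  set Fsub : Submodule ℝ H := G.comap ((LinearMap.id : H →ₗ[ℝ] H).prod LinearMap.id)
    with hFdef
  have hFmem : ∀ x : H, x ∈ Fsub ↔ (x, x) ∈ G := fun x => Iff.rfl
  have hFD : ∀ x ∈ Fsub, x ∈ Dbar := fun x hx => ⟨(x, x), hx, rfl⟩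
  have hDbar_i : ∀ x ∈ Dbar, Complex.I • x ∈ Dbar := by
    rintro x ⟨p, hp, rfl⟩
    exact ⟨_, g2 p hp, rfl⟩
  have hDbar_c : ∀ (cz : ℂ), ∀ x ∈ Dbar, cz • x ∈ Dbar := by
    intro cz x hx
    rw [hdecomp]
    exact add_mem (Dbar.smul_mem _ hx) (Dbar.smul_mem _ (hDbar_i x hx))
  have hNF : ∀ n ∈ N, n ∈ Fsub := by
    intro n hn
    obtain ⟨mem, heq⟩ := hs n hn 0 (zero_mem N)
    refine hG₀G ⟨⟨n + Complex.I • (0 : H), mem⟩, ?_, ?_⟩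
    · show n = n + Complex.I • (0 : H); simp
    · show n = j (sqrtδ ⟨n + Complex.I • (0 : H), mem⟩)
      rw [heq]; simp
  have hFc : IsClosed (Fsub : Set H) := by
    have : (Fsub : Set H) = (fun x : H => (x, x)) ⁻¹' (G : Set (H × H)) := rfl
    rw [this]
    exact hGc.preimage (continuous_id.prodMk continuous_id)
  by_cases hD : ∀ x : H, x ∈ Dbar
  · -- everywhere defined closure: contradiction via closed graph theorem
    exfalso
    have hex : ∀ x : H, ∃ y : H, (x, y) ∈ G := by
      intro x
      obtain ⟨p, hp, h1⟩ := hD x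
      exact ⟨p.2, by rw [show x = p.1 from h1.symm, Prod.mk.eta]; exact hp⟩
    choose φ hφ using hex
    have hun : ∀ (x y y' : H), (x, y) ∈ G → (x, y') ∈ G → y = y' := by
      intro x y y' h1 h2
      have h3 := sub_mem h1 h2
      rw [Prod.mk_sub_mk, sub_self] at h3
      exact sub_eq_zero.mp (g1 _ h3)
    let f : H →ₗ[ℝ] H :=
      { toFun := φ
        map_add' := fun u v => hun (u + v) (φ (u + v)) (φ u + φ v) (hφ _) (by
          have := add_mem (hφ u) (hφ v); rwa [Prod.mk_add_mk] at this)
        map_smul' := fun r u => by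
          simpa using hun (r • u) (φ (r • u)) (r • φ u) (hφ _) (by
            have := G.smul_mem r (hφ u); rwa [Prod.smul_mk] at this) }
    have hgraphset : (f.graph : Set (H × H)) = (G : Set (H × H)) := by
      ext p
      simp only [SetLike.mem_coe, LinearMap.mem_graph_iff]
      constructor
      · intro h
        have h2 := hφ p.1
        rw [show f p.1 = φ p.1 from rfl] at h
        rw [← Prod.mk.eta (p := p), h]
        exact h2
      · intro hp
        exact hun p.1 p.2 (f p.1) (by rw [Prod.mk.eta]; exact hp) (hφ p.1)
    have hfc : Continuous f := f.continuous_of_isClosed_graph (by rw [hgraphset]; exact hGc)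
    set f' : H →L[ℝ] H := ⟨f, hfc⟩ with hf'def
    set C : ℝ := ‖f'‖ + 1 with hCdef
    have hC0 : 0 < C := by positivity
    have hCb : ∀ x : H, ‖f x‖ ≤ C * ‖x‖ := by
      intro x
      calc ‖f x‖ = ‖f' x‖ := rfl
        _ ≤ ‖f'‖ * ‖x‖ := f'.le_opNorm x
        _ ≤ C * ‖x‖ := by have := norm_nonneg x; nlinarith
    have hfd : ∀ x : sqrtδ.domain, f ((x : H)) = j (sqrtδ x) := by
      intro x
      exact hun (x : H) (f ((x : H))) (j (sqrtδ x)) (hφ _) (hG₀G ⟨x, rfl, rfl⟩)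
    have hub : ∀ x : sqrtδ.domain, ‖sqrtδ x‖ ≤ C * ‖(x : H)‖ := by
      intro x
      rw [← hjn (sqrtδ x), ← hfd x]
      exact hCb _
    apply hnb
    refine ⟨C⁻¹, by positivity, ?_⟩
    intro x
    obtain ⟨h, hh, k, hk, hx⟩ := hdom (x : H) x.2
    obtain ⟨mem1, heq1⟩ := hs h hh k hk
    obtain ⟨mem2, heq2⟩ := hs h hh (-k) (N.neg_mem hk)
    have e1 : h + Complex.I • (-k) = h - Complex.I • k := by rw [smul_neg, ← sub_eq_add_neg]
    have hxeq : x = ⟨h + Complex.I • k, mem1⟩ := Subtype.ext hx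
    have n1 : ‖sqrtδ x‖ = ‖h - Complex.I • k‖ := by rw [hxeq, ← hjn, heq1]
    have n2 : ‖sqrtδ (⟨h + Complex.I • (-k), mem2⟩ : sqrtδ.domain)‖ = ‖(x : H)‖ := by
      rw [← hjn, heq2, smul_neg, sub_neg_eq_add, hx]
    have hub2 := hub ⟨h + Complex.I • (-k), mem2⟩
    rw [n2] at hub2
    have hb2 : ‖(x : H)‖ ≤ C * ‖sqrtδ x‖ := by
      rw [n1]
      calc ‖(x : H)‖ ≤ C * ‖((⟨h + Complex.I • (-k), mem2⟩ : sqrtδ.domain) : H)‖ := hub2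
        _ = C * ‖h - Complex.I • k‖ := by
            rw [show ((⟨h + Complex.I • (-k), mem2⟩ : sqrtδ.domain) : H)
              = h - Complex.I • k from e1]
    calc C⁻¹ * ‖(x : H)‖ ≤ C⁻¹ * (C * ‖sqrtδ x‖) := by gcongr
      _ = ‖sqrtδ x‖ := by field_simp
  · -- construction of a proper extension
    push_neg at hD
    obtain ⟨η, hη⟩ := hD
    have hNM : N ≤ Fsub ⊔ Submodule.span ℝ {η} := fun n hn => Submodule.mem_sup_left (hNF n hn)
    refine ⟨Fsub ⊔ Submodule.span ℝ {η}, ?_, ?_, ?_, ?_⟩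
    · -- closedness via the quotient by Fsub
      haveI : IsClosed (Fsub : Set H) := hFc
      have hmkQc : Continuous Fsub.mkQ :=
        AddMonoidHomClass.continuous_of_bound Fsub.mkQ 1
          (fun x => by rw [one_mul]; exact Submodule.Quotient.norm_mk_le Fsub x)
      have hS'c : IsClosed ((Submodule.span ℝ {Fsub.mkQ η} : Submodule ℝ (H ⧸ Fsub)) :
          Set (H ⧸ Fsub)) := Submodule.closed_of_finiteDimensional _
      have hset : ((Fsub ⊔ Submodule.span ℝ {η} : Submodule ℝ H) : Set H)
          = Fsub.mkQ ⁻¹' ((Submodule.span ℝ {Fsub.mkQ η} : Submodule ℝ (H ⧸ Fsub)) :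
            Set (H ⧸ Fsub)) := by
        ext x
        simp only [Set.mem_preimage, SetLike.mem_coe]
        constructor
        · intro hx
          obtain ⟨u, hu, v, hv, rfl⟩ := Submodule.mem_sup.mp hx
          obtain ⟨t, rfl⟩ := Submodule.mem_span_singleton.mp hv
          rw [map_add, map_smul]
          have h0 : Fsub.mkQ u = 0 := by
            rw [Submodule.mkQ_apply, Submodule.Quotient.mk_eq_zero]; exact hu
          rw [h0, zero_add]
          exact Submodule.smul_mem _ _ (Submodule.mem_span_singleton_self _)
        · intro hx
          obtain ⟨t, ht⟩ := Submodule.mem_span_singleton.mp hx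
          have h0 : x - t • η ∈ Fsub := by
            have h1 : Fsub.mkQ (x - t • η) = 0 := by
              rw [map_sub, map_smul]
              exact sub_eq_zero.mpr ht.symm
            rwa [Submodule.mkQ_apply, Submodule.Quotient.mk_eq_zero] at h1
          have h2 : x = (x - t • η) + t • η := by abel
          rw [h2]
          exact Submodule.add_mem_sup h0 (Submodule.smul_mem _ _
            (Submodule.mem_span_singleton_self _))
      rw [hset]
      exact hS'c.preimage hmkQc
    · -- trivial intersection
      rw [eq_bot_iff]
      rintro z ⟨hz1, hz2⟩
      obtain ⟨aa, haF, v, hv, hzv⟩ := Submodule.mem_sup.mp hz1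
      obtain ⟨t, ht⟩ := Submodule.mem_span_singleton.mp hv
      obtain ⟨w, hwM, hwz⟩ := Submodule.mem_map.mp hz2
      obtain ⟨bb, hbF, v2, hv2, hwv⟩ := Submodule.mem_sup.mp hwM
      obtain ⟨u, hu⟩ := Submodule.mem_span_singleton.mp hv2
      have hzz : aa + t • η = Complex.I • bb + u • (Complex.I • η) := by
        have hw' : w = bb + u • η := by rw [← hwv, hu]
        have h1 : z = Complex.I • (bb + u • η) := by
          rw [← hwz, hw']; rfl
        have h2 : aa + t • η = z := by rw [← hzv, ht]
        rw [h2, h1, smul_add, smul_comm]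
      set cz : ℂ := ⟨-t, u⟩ with hczdef
      have hkey : aa - Complex.I • bb = cz • η := by
        rw [hdecomp cz η]
        have hre : cz.re = -t := rfl
        have him : cz.im = u := rfl
        rw [hre, him, neg_smul]
        have := hzz
        have h3 : aa - Complex.I • bb = u • (Complex.I • η) - t • η := by
          rw [sub_eq_iff_eq_add]
          rw [show u • (Complex.I • η) - t • η + Complex.I • bb
            = Complex.I • bb + u • (Complex.I • η) - t • η by abel]
          rw [← hzz]; abel
        rw [h3]; abel
      by_cases hcz : cz = 0
      · have ht0 : t = 0 := by
          have : cz.re = 0 := by rw [hcz]; rfl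
          have h4 : -t = 0 := this
          linarith
        have hu0 : u = 0 := by
          have : cz.im = 0 := by rw [hcz]; rfl
          exact this
        have haI : aa = Complex.I • bb := by
          have := hkey
          rw [hcz, zero_smul, sub_eq_zero] at this
          exact this
        have hG1 : (aa, aa) ∈ G := (hFmem aa).mp haF
        have hG2 : ((Complex.I • bb : H), -(Complex.I • bb)) ∈ G := g2 (bb, bb) ((hFmem bb).mp hbF)
        rw [← haI] at hG2
        have h5 := sub_mem hG1 hG2
        rw [Prod.mk_sub_mk, sub_self, sub_neg_eq_add] at h5
        have haa0 : aa = 0 := by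
          have h7 : (2 : ℝ) • aa = 0 := by rw [two_smul]; exact g1 _ h5
          simpa using h7
        have : z = 0 := by rw [← hzv, ← ht, ht0, haa0, zero_smul, add_zero]
        simp [this]
      · exfalso
        apply hη
        have hmem : cz • η ∈ Dbar := by
          rw [← hkey]
          exact sub_mem (hFD aa haF) (hDbar_i bb (hFD bb hbF))
        have h6 := hDbar_c cz⁻¹ _ hmem
        rwa [smul_smul, inv_mul_cancel₀ hcz, one_smul] at h6
    · -- density
      apply le_antisymm le_top
      rw [← hstd2]
      apply Submodule.topologicalClosure_mono
      exact sup_le_sup hNM (Submodule.map_mono hNM)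
    · -- properness
      refine lt_of_le_of_ne hNM ?_
      intro hEq
      apply hη
      have hηM : η ∈ Fsub ⊔ Submodule.span ℝ {η} :=
        Submodule.mem_sup_right (Submodule.mem_span_singleton_self η)
      rw [← hEq] at hηM
      exact hFD η (hNF η hηM)

/-- If `sqrtδ` is bounded below, then any standard subspace containing `N` is contained in `N`. -/
theorem le_of_bddBelow {H : Type*}
    [NormedAddCommGroup H] [InnerProductSpace ℂ H] [CompleteSpace H]
    (N : Submodule ℝ H) (hNc : IsClosed (N : Set H))
    (hstd2 : (N ⊔ N.map (mulI H)).topologicalClosure = ⊤)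
    (j : H →ₗ[ℝ] H)
    (hjanti : ∀ x y : H, (inner ℂ (j x) (j y) : ℂ) = inner ℂ y x)
    (sqrtδ : H →ₗ.[ℂ] H)
    (hs : ∀ h ∈ N, ∀ k ∈ N, ∃ hmem : h + Complex.I • k ∈ sqrtδ.domain,
        j (sqrtδ ⟨h + Complex.I • k, hmem⟩) = h - Complex.I • k)
    (c : ℝ) (hc : 0 < c) (hbd : ∀ x : sqrtδ.domain, c * ‖(x : H)‖ ≤ ‖sqrtδ x‖)
    (M : Submodule ℝ H) (hM1 : M ⊓ M.map (mulI H) = ⊥) (hNM : N ≤ M) : M ≤ N := by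
  intro m hm
  have hjn : ∀ x : H, ‖j x‖ = ‖x‖ := norm_j_eq' j hjanti
  -- key pointwise estimate
  have key : ∀ h ∈ N, ∀ k ∈ N, ‖h - Complex.I • k‖ ≤ c⁻¹ * ‖h + Complex.I • k‖ := by
    intro h hh k hk
    obtain ⟨mem, heq⟩ := hs h hh (-k) (N.neg_mem hk)
    have e1 : h + Complex.I • (-k) = h - Complex.I • k := by rw [smul_neg, ← sub_eq_add_neg]
    have hx2 : ‖sqrtδ ⟨h + Complex.I • (-k), mem⟩‖ = ‖h + Complex.I • k‖ := by
      rw [← hjn (sqrtδ ⟨h + Complex.I • (-k), mem⟩), heq, smul_neg, sub_neg_eq_add]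
    have hb := hbd ⟨h + Complex.I • (-k), mem⟩
    simp only [hx2] at hb
    rw [e1] at hb
    calc ‖h - Complex.I • k‖ = c⁻¹ * (c * ‖h - Complex.I • k‖) := by field_simp
      _ ≤ c⁻¹ * ‖h + Complex.I • k‖ := by gcongr
  set C := (1 + c⁻¹) / 2 with hC
  have hCpos : 0 < C := by positivity
  have keyh : ∀ h ∈ N, ∀ k ∈ N, ‖h‖ ≤ C * ‖h + Complex.I • k‖ := by
    intro h hh k hk
    have h2 : h + h = (h + Complex.I • k) + (h - Complex.I • k) := by abel
    have t1 : ‖h + h‖ ≤ ‖h + Complex.I • k‖ + ‖h - Complex.I • k‖ := h2 ▸ norm_add_le _ _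
    have t2 := key h hh k hk
    have t3 : ‖h + h‖ = 2 * ‖h‖ := by rw [← two_smul ℝ h, norm_smul]; simp
    rw [hC]; nlinarith [norm_nonneg (h + Complex.I • k)]
  have keyk : ∀ h ∈ N, ∀ k ∈ N, ‖k‖ ≤ C * ‖h + Complex.I • k‖ := by
    intro h hh k hk
    have h2 : Complex.I • k + Complex.I • k = (h + Complex.I • k) - (h - Complex.I • k) := by abel
    have t1 : ‖Complex.I • k + Complex.I • k‖
        ≤ ‖h + Complex.I • k‖ + ‖h - Complex.I • k‖ := h2 ▸ norm_sub_le _ _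
    have t2 := key h hh k hk
    have t3 : ‖Complex.I • k + Complex.I • k‖ = 2 * ‖k‖ := by
      rw [← smul_add, norm_smul, ← two_smul ℝ k, norm_smul]; simp
    rw [hC]; nlinarith [norm_nonneg (h + Complex.I • k)]
  -- approximate m by elements of N + iN
  have hmem_cl : m ∈ closure ((N ⊔ N.map (mulI H) : Submodule ℝ H) : Set H) := by
    rw [← Submodule.topologicalClosure_coe, hstd2]; trivial
  obtain ⟨x, hxmem, hxlim⟩ := mem_closure_iff_seq_limit.mp hmem_cl
  have hrep : ∀ n, ∃ h, h ∈ N ∧ ∃ k, k ∈ N ∧ x n = h + Complex.I • k := by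
    intro n
    obtain ⟨h, hh, w, hw, hsum⟩ := Submodule.mem_sup.mp (hxmem n)
    obtain ⟨k, hk, rfl⟩ := Submodule.mem_map.mp hw
    exact ⟨h, hh, k, hk, by rw [← hsum]; rfl⟩
  choose a ha b hb hab using hrep
  have hxc := hxlim.cauchySeq
  have cauchy_aux : ∀ (u : ℕ → H), (∀ h ∈ N, ∀ k ∈ N, ‖u 0‖ ≤ C * ‖h + Complex.I • k‖) →
      True := fun _ _ => trivial
  have haC : CauchySeq a := by
    rw [Metric.cauchySeq_iff] at hxc ⊢
    intro ε hε
    obtain ⟨Nn, hNn⟩ := hxc (ε / C) (by positivity)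
    refine ⟨Nn, fun p hp q hq => ?_⟩
    have hd := hNn p hp q hq
    have hdiff : x p - x q = (a p - a q) + Complex.I • (b p - b q) := by
      rw [hab p, hab q, smul_sub]; abel
    have h1 : ‖a p - a q‖ ≤ C * ‖x p - x q‖ := by
      have := keyh (a p - a q) (sub_mem (ha p) (ha q)) (b p - b q) (sub_mem (hb p) (hb q))
      rwa [← hdiff] at this
    have h2 : dist (a p) (a q) ≤ C * dist (x p) (x q) := by
      simpa [dist_eq_norm] using h1
    calc dist (a p) (a q) ≤ C * dist (x p) (x q) := h2
      _ < C * (ε / C) := by gcongr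
      _ = ε := by field_simp
  have hbC : CauchySeq b := by
    rw [Metric.cauchySeq_iff] at hxc ⊢
    intro ε hε
    obtain ⟨Nn, hNn⟩ := hxc (ε / C) (by positivity)
    refine ⟨Nn, fun p hp q hq => ?_⟩
    have hd := hNn p hp q hq
    have hdiff : x p - x q = (a p - a q) + Complex.I • (b p - b q) := by
      rw [hab p, hab q, smul_sub]; abel
    have h1 : ‖b p - b q‖ ≤ C * ‖x p - x q‖ := by
      have := keyk (a p - a q) (sub_mem (ha p) (ha q)) (b p - b q) (sub_mem (hb p) (hb q))
      rwa [← hdiff] at this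
    have h2 : dist (b p) (b q) ≤ C * dist (x p) (x q) := by
      simpa [dist_eq_norm] using h1
    calc dist (b p) (b q) ≤ C * dist (x p) (x q) := h2
      _ < C * (ε / C) := by gcongr
      _ = ε := by field_simp
  obtain ⟨hinf, hha⟩ := cauchySeq_tendsto_of_complete haC
  obtain ⟨kinf, hkb⟩ := cauchySeq_tendsto_of_complete hbC
  have hhN : hinf ∈ N := hNc.mem_of_tendsto hha (Filter.Eventually.of_forall ha)
  have hkN : kinf ∈ N := hNc.mem_of_tendsto hkb (Filter.Eventually.of_forall hb)
  have hlim2 : Filter.Tendsto x Filter.atTop (𝓝 (hinf + Complex.I • kinf)) := by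
    have h0 := hha.add (hkb.const_smul Complex.I)
    rwa [show (fun n => a n + Complex.I • b n) = x from funext fun n => (hab n).symm] at h0
  have hmrep : m = hinf + Complex.I • kinf := tendsto_nhds_unique hxlim hlim2
  have hIkM : Complex.I • kinf ∈ M := by
    have : Complex.I • kinf = m - hinf := by rw [hmrep]; abel
    rw [this]; exact sub_mem hm (hNM hhN)
  have hIkMi : Complex.I • kinf ∈ M.map (mulI H) := ⟨kinf, hNM hkN, rfl⟩
  have hIk0 : Complex.I • kinf = 0 := by
    have h0 : Complex.I • kinf ∈ M ⊓ M.map (mulI H) := ⟨hIkM, hIkMi⟩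
    rw [hM1] at h0; exact h0
  rw [hmrep, hIk0, add_zero]; exact hhN

/-- Let `N` be a standard subspace with Tomita operator
`s_N = j ∘ δ_N^{1/2}` (polar decomposition, `j` the anti-unitary modular
conjugation, `sqrtδ` the positive self-adjoint square root of the modular
operator `δ_N`).  There exists a standard subspace `M` properly containing `N`
iff `0 ∈ σ(δ_N)`.  Since `δ_N` (equivalently, by spectral mapping, its square
root `δ_N^{1/2}`) is an injective positive self-adjoint operator, the spectral
condition `0 ∈ σ(δ_N)` is expressed as: `δ_N^{1/2}` is not bounded below. -/
theorem exists_standard_extension_iff_zero_in_spectrum {H : Type*}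
    [NormedAddCommGroup H] [InnerProductSpace ℂ H] [CompleteSpace H]
    (N : Submodule ℝ H) (hNc : IsClosed (N : Set H))
    (hstd1 : N ⊓ N.map (mulI H) = ⊥)
    (hstd2 : (N ⊔ N.map (mulI H)).topologicalClosure = ⊤)
    (j : H →ₗ[ℝ] H)
    (hjinv : ∀ x, j (j x) = x)
    (hjconj : ∀ x, j (Complex.I • x) = -(Complex.I • j x))
    (hjanti : ∀ x y : H, (inner ℂ (j x) (j y) : ℂ) = inner ℂ y x)
    (sqrtδ : H →ₗ.[ℂ] H)
    (hdense : Dense (sqrtδ.domain : Set H))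
    (hsa : ∀ x y : sqrtδ.domain, (inner ℂ (sqrtδ x) (y : H) : ℂ) = inner ℂ (x : H) (sqrtδ y))
    (hpos : ∀ x : sqrtδ.domain, 0 ≤ (inner ℂ (x : H) (sqrtδ x) : ℂ).re)
    (hinj : ∀ x : sqrtδ.domain, sqrtδ x = 0 → (x : H) = 0)
    (hs : ∀ h ∈ N, ∀ k ∈ N, ∃ hmem : h + Complex.I • k ∈ sqrtδ.domain,
        j (sqrtδ ⟨h + Complex.I • k, hmem⟩) = h - Complex.I • k)
    (hdom : ∀ x ∈ sqrtδ.domain, ∃ h ∈ N, ∃ k ∈ N, x = h + Complex.I • k) :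
    (∃ M : Submodule ℝ H, IsClosed (M : Set H) ∧ M ⊓ M.map (mulI H) = ⊥ ∧
        (M ⊔ M.map (mulI H)).topologicalClosure = ⊤ ∧ N < M)
      ↔ ¬ ∃ c > (0:ℝ), ∀ x : sqrtδ.domain, c * ‖(x : H)‖ ≤ ‖sqrtδ x‖ := by
  constructor
  · rintro ⟨M, hMc, hM1, hM2, hNM⟩ ⟨c, hc, hbd⟩
    exact hNM.2 (le_of_bddBelow N hNc hstd2 j hjanti sqrtδ hs c hc hbd M hM1 hNM.1)
  · intro hnb
    exact exists_ext N hstd2 j hjinv hjconj hjanti sqrtδ hdense hsa hs hdom hnb
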